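/- Let p be an odd prime and G a finite p-group. Then for all i ≥ 0, the iterated commutator [η_i(G), G, G, ..., G] (with G appearing i times) is contained in η_i(G)^p. -/

import Mathlib

/-- The subgroup generated by `p`-th powers of elements of `N`. -/
def pPow {G : Type*} [Group G] (p : ℕ) (N : Subgroup G) : Subgroup G :=
  Subgroup.closure ((fun x => x ^ p) '' (N : Set G))

theorem pPow_normal {G : Type*} [Group G] (p : ℕ) {N : Subgroup G} (hN : N.Normal) :
    (pPow p N).Normal := by
  constructor
  intro x hx g
  have h : pPow p N ≤ Subgroup.comap (MulAut.conj g).toMonoidHom (pPow p N) := by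
    rw [pPow, Subgroup.closure_le]
    rintro - ⟨n, hn, rfl⟩
    have : (MulAut.conj g) (n ^ p) = (g * n * g⁻¹) ^ p := by
      simp [MulAut.conj_apply, conj_pow]
    refine Subgroup.mem_comap.2 ?_
    show (MulAut.conj g) (n ^ p) ∈ _
    rw [this]
    exact Subgroup.subset_closure ⟨g * n * g⁻¹, hN.conj_mem n hn g, rfl⟩
  simpa using h hx

theorem normal_sSup {G : Type*} [Group G] {S : Set (Subgroup G)}
    (hS : ∀ N ∈ S, N.Normal) : (sSup S).Normal := by
  constructor
  intro x hx g
  have h : sSup S ≤ Subgroup.comap (MulAut.conj g).toMonoidHom (sSup S) := by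
    refine sSup_le fun N hN => le_trans ?_ (Subgroup.comap_mono (le_sSup hN))
    intro n hn
    exact Subgroup.mem_comap.2 (by simpa using (hS N hN).conj_mem n hn g)
  simpa using h hx

/-- The upper η-series: `η₀ = 1`, and `η_{i+1}/η_i = η(G/η_i)` is the product of all
powerfully embedded subgroups of `G/η_i`. -/
def etaUp (p : ℕ) (G : Type*) [Group G] : ℕ → Subgroup G
  | 0 => ⊥
  | i + 1 => sSup {N : Subgroup G | N.Normal ∧ ⁅N, (⊤ : Subgroup G)⁆ ≤ pPow p N ⊔ etaUp p G i}

instance etaUp_normal (p : ℕ) (G : Type*) [Group G] (i : ℕ) : (etaUp p G i).Normal := by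
  cases i with
  | zero => show (⊥ : Subgroup G).Normal; infer_instance
  | succ i => exact normal_sSup fun N hN => hN.1

/-- The powerful class of `G`. -/
noncomputable def pwc (p : ℕ) (G : Type*) [Group G] : ℕ := sInf {k | etaUp p G k = ⊤}

/-- Iterated commutator `[N, G, G, ..., G]` with `i` copies of `G`. -/
def itComm {G : Type*} [Group G] (N : Subgroup G) : ℕ → Subgroup G
  | 0 => N
  | i + 1 => ⁅itComm N i, (⊤ : Subgroup G)⁆

/-- `N` is PF-embedded in `G`: it admits a potent filtration. -/
def PFEmbedded {G : Type*} [Group G] (p : ℕ) (N : Subgroup G) : Prop :=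
  ∃ (s : ℕ) (M : ℕ → Subgroup G), M 0 = N ∧ M s = ⊥ ∧
    (∀ i, M (i + 1) ≤ M i) ∧ (∀ i, (M i).Normal) ∧
    (∀ i, ⁅M i, (⊤ : Subgroup G)⁆ ≤ M (i + 1)) ∧
    (∀ i, itComm (M i) (p - 1) ≤ pPow p (M (i + 1)))


section Aux
open scoped commutatorElement
variable {G : Type*} [Group G]

lemma pPow_mono (p : ℕ) {N M : Subgroup G} (h : N ≤ M) : pPow p N ≤ pPow p M :=
  Subgroup.closure_mono (Set.image_mono h)

/-- Helper subgroup: elements whose commutators with all of `K` lie in a normal `X`. -/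
def commStab (K X : Subgroup G) (hX : X.Normal) : Subgroup G where
  carrier := {g | ∀ k ∈ K, ⁅g, k⁆ ∈ X}
  one_mem' := by intro k hk; simpa using X.one_mem
  mul_mem' := by
    intro a b ha hb k hk
    have : ⁅a * b, k⁆ = a * ⁅b, k⁆ * a⁻¹ * ⁅a, k⁆ := by
      simp only [commutatorElement_def]; group
    rw [this]
    exact X.mul_mem (hX.conj_mem _ (hb k hk) a) (ha k hk)
  inv_mem' := by
    intro a ha k hk
    have : ⁅a⁻¹, k⁆ = a⁻¹ * ⁅a, k⁆⁻¹ * a := by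
      simp only [commutatorElement_def]; group
    rw [this]
    simpa using hX.conj_mem _ (X.inv_mem (ha k hk)) a⁻¹

lemma commutator_sSup_le {S : Set (Subgroup G)} {K X : Subgroup G} (hX : X.Normal)
    (h : ∀ N ∈ S, ⁅N, K⁆ ≤ X) : ⁅sSup S, K⁆ ≤ X := by
  rw [Subgroup.commutator_le]
  intro g hg k hk
  have hle : sSup S ≤ commStab K X hX := by
    refine sSup_le fun N hN n hn => ?_
    intro k hk
    exact (h N hN) (Subgroup.commutator_mem_commutator hn hk)
  exact hle hg k hk

lemma commutator_sup_le {A B K X : Subgroup G} (hX : X.Normal)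
    (hA : ⁅A, K⁆ ≤ X) (hB : ⁅B, K⁆ ≤ X) : ⁅A ⊔ B, K⁆ ≤ X := by
  have := commutator_sSup_le (S := {A, B}) (K := K) hX (by rintro N (rfl | rfl) <;> assumption)
  rwa [sSup_pair] at this

lemma etaUp_le_succ (p : ℕ) (i : ℕ) : etaUp p G i ≤ etaUp p G (i + 1) := by
  haveI := etaUp_normal p G i
  exact le_sSup ⟨etaUp_normal p G i, le_trans (Subgroup.commutator_le_left _ _) le_sup_right⟩

lemma comm_etaUp_succ (p : ℕ) (i : ℕ) :
    ⁅etaUp p G (i + 1), (⊤ : Subgroup G)⁆ ≤ pPow p (etaUp p G (i + 1)) ⊔ etaUp p G i := by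
  have hX : (pPow p (etaUp p G (i + 1)) ⊔ etaUp p G i).Normal :=
    haveI := pPow_normal p (etaUp_normal p G (i + 1))
    Subgroup.sup_normal _ _
  exact commutator_sSup_le hX fun N hN =>
    le_trans hN.2 (sup_le_sup_right (pPow_mono p (le_sSup hN)) _)

instance itComm_normal {N : Subgroup G} [hN : N.Normal] (j : ℕ) : (itComm N j).Normal := by
  induction j with
  | zero => exact hN
  | succ j ih => exact @Subgroup.commutator_normal _ _ _ _ ih _

end Aux

/-- `[η_i(G), G, …, G]` (with `i` copies of `G`) is contained in `η_i(G)^p`. -/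
theorem itComm_etaUp_le_pPow {p : ℕ} (hp : p.Prime) (hodd : Odd p)
    {G : Type*} [Group G] [Finite G] (hG : IsPGroup p G) (i : ℕ) :
    itComm (etaUp p G i) i ≤ pPow p (etaUp p G i) := by
  induction i with
  | zero => exact bot_le
  | succ i ih =>
    set E := etaUp p G (i + 1) with hE
    set F := etaUp p G i with hF
    haveI : E.Normal := etaUp_normal p G (i + 1)
    haveI : F.Normal := etaUp_normal p G i
    haveI : (pPow p E).Normal := pPow_normal p (etaUp_normal p G (i + 1))
    have key : ∀ j, itComm E (j + 1) ≤ pPow p E ⊔ itComm F j := by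
      intro j
      induction j with
      | zero => exact comm_etaUp_succ p i
      | succ j ihj =>
        calc itComm E (j + 2) = ⁅itComm E (j + 1), (⊤ : Subgroup G)⁆ := rfl
          _ ≤ ⁅pPow p E ⊔ itComm F j, (⊤ : Subgroup G)⁆ :=
            Subgroup.commutator_mono ihj le_rfl
          _ ≤ pPow p E ⊔ itComm F (j + 1) := by
            refine commutator_sup_le ?_ ?_ ?_
            · exact Subgroup.sup_normal _ _
            · exact le_trans (Subgroup.commutator_le_left _ _) le_sup_left
            · exact le_sup_right
    calc itComm E (i + 1) ≤ pPow p E ⊔ itComm F i := key i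
      _ ≤ pPow p E ⊔ pPow p F := sup_le_sup_left ih _
      _ ≤ pPow p E := sup_le le_rfl (pPow_mono p (etaUp_le_succ p i))
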